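/- Let 1 < α ≤ 2, y > 0, T > 0, and let h₁ : [0,T] → ℝ and h₂ : [0,T] → (0,∞) be functions such that h₂ is differentiable, h₂(0) = y, and h₂'(t) = −2h₂(t)/(h₁(t)² + h₂(t)²)^{α/2} for all t ∈ [0,T]. Then h₂(u) > y/2 for every u ∈ [0,T] with u < y^α/2^{2+α}. -/
import Mathlib


open Set Topology Filter

/-- Let `1 < α ≤ 2`, `y > 0`, `T > 0`, `h₁ : [0,T] → ℝ`, `h₂ : [0,T] → (0,∞)`
with `h₂` differentiable, `h₂(0) = y` and `h₂'(t) = -2h₂(t)/(h₁(t)² + h₂(t)²)^{α/2}` on `[0,T]`.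
Then `h₂(u) > y/2` for every `u ∈ [0,T]` with `u < y^α/2^{2+α}`. -/
theorem stmt15 (α y T : ℝ) (hα1 : 1 < α) (hα2 : α ≤ 2)
    (hy : 0 < y) (hT : 0 < T) (h₁ h₂ : ℝ → ℝ)
    (hpos : ∀ t ∈ Icc (0 : ℝ) T, 0 < h₂ t)
    (h20 : h₂ 0 = y)
    (hderiv : ∀ t ∈ Icc (0 : ℝ) T,
      HasDerivWithinAt h₂ (-2 * h₂ t / (h₁ t ^ 2 + h₂ t ^ 2) ^ (α / 2)) (Icc (0 : ℝ) T) t) :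
    ∀ u ∈ Icc (0 : ℝ) T, u < y ^ α / 2 ^ (2 + α) → y / 2 < h₂ u := by
  intro u hu huB
  by_contra hcon
  push_neg at hcon
  have hcont : ContinuousOn h₂ (Icc 0 T) := fun t ht => (hderiv t ht).continuousWithinAt
  have hsubT : Icc (0 : ℝ) u ⊆ Icc 0 T := Icc_subset_Icc le_rfl hu.2
  set K : Set ℝ := Icc (0 : ℝ) u ∩ h₂ ⁻¹' Iic (y / 2) with hKdef
  have hKclosed : IsClosed K :=
    (hcont.mono hsubT).preimage_isClosed_of_isClosed isClosed_Icc isClosed_Iic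
  have hKne : K.Nonempty := ⟨u, ⟨hu.1, le_rfl⟩, hcon⟩
  have hKbdd : BddBelow K := ⟨0, fun t ht => ht.1.1⟩
  set t₀ := sInf K with ht₀def
  have ht₀K : t₀ ∈ K := hKclosed.csInf_mem hKne hKbdd
  have ht₀u : t₀ ≤ u := ht₀K.1.2
  have ht₀0 : 0 ≤ t₀ := ht₀K.1.1
  have ht₀le : h₂ t₀ ≤ y / 2 := ht₀K.2
  have ht₀pos : 0 < t₀ := by
    rcases eq_or_lt_of_le ht₀0 with h | h
    · exfalso; rw [← h] at ht₀le; rw [h20] at ht₀le; linarith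
    · exact h
  have ht₀T : t₀ ≤ T := ht₀u.trans hu.2
  have hsub : Icc (0 : ℝ) t₀ ⊆ Icc 0 T := Icc_subset_Icc le_rfl ht₀T
  -- below t₀, h₂ stays above y/2
  have hlt : ∀ t, 0 ≤ t → t < t₀ → y / 2 < h₂ t := by
    intro t ht ht'
    by_contra h
    push_neg at h
    have : t ∈ K := ⟨⟨ht, ht'.le.trans ht₀u⟩, h⟩
    exact absurd (csInf_le hKbdd this) (not_le.2 ht')
  have hge : ∀ t ∈ Icc (0 : ℝ) t₀, y / 2 ≤ h₂ t := by
    intro t ht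
    rcases eq_or_lt_of_le ht.2 with heq | h
    · rw [heq]
      have hne : (𝓝[Ico (0 : ℝ) t₀] t₀).NeBot := right_nhdsWithin_Ico_neBot ht₀pos
      have htend : Filter.Tendsto h₂ (𝓝[Ico (0 : ℝ) t₀] t₀) (𝓝 (h₂ t₀)) :=
        (hcont t₀ ⟨ht₀0, ht₀T⟩).mono (fun s hs => ⟨hs.1, hs.2.le.trans ht₀T⟩)
      exact ge_of_tendsto htend (eventually_mem_nhdsWithin.mono fun s hs => (hlt s hs.1 hs.2).le)
    · exact (hlt t ht.1 h).le
  -- the constant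
  set C : ℝ := 2 * (y / 2) ^ (1 - α) with hCdef
  have hy2 : (0 : ℝ) < y / 2 := by linarith
  have hCpos : 0 < C := by positivity
  -- derivative bound on [0, t₀]
  have hbound : ∀ t ∈ Icc (0 : ℝ) t₀,
      ‖-2 * h₂ t / (h₁ t ^ 2 + h₂ t ^ 2) ^ (α / 2)‖ ≤ C := by
    intro t ht
    have htT : t ∈ Icc (0 : ℝ) T := hsub ht
    have ha : 0 < h₂ t := hpos t htT
    have hay : y / 2 ≤ h₂ t := hge t ht
    have hApos : 0 < h₁ t ^ 2 + h₂ t ^ 2 := by positivity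
    have hP : (0 : ℝ) < (h₁ t ^ 2 + h₂ t ^ 2) ^ (α / 2) := Real.rpow_pos_of_pos hApos _
    have haα : h₂ t ^ α ≤ (h₁ t ^ 2 + h₂ t ^ 2) ^ (α / 2) := by
      have h1 : h₂ t ^ α = (h₂ t ^ 2) ^ (α / 2) := by
        rw [← Real.rpow_natCast (h₂ t) 2, ← Real.rpow_mul ha.le]
        congr 1; push_cast; ring
      rw [h1]
      exact Real.rpow_le_rpow (by positivity) (by nlinarith [sq_nonneg (h₁ t)])
        (by linarith)
    have hnorm : ‖-2 * h₂ t / (h₁ t ^ 2 + h₂ t ^ 2) ^ (α / 2)‖ =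
        2 * h₂ t / (h₁ t ^ 2 + h₂ t ^ 2) ^ (α / 2) := by
      rw [Real.norm_eq_abs, abs_div, abs_of_pos hP,
        show -2 * h₂ t = -(2 * h₂ t) by ring, abs_neg, abs_of_pos (by linarith)]
    rw [hnorm]
    have hstep1 : 2 * h₂ t / (h₁ t ^ 2 + h₂ t ^ 2) ^ (α / 2) ≤ 2 * h₂ t / h₂ t ^ α := by
      gcongr
    have hstep2 : 2 * h₂ t / h₂ t ^ α = 2 * h₂ t ^ (1 - α) := by
      rw [Real.rpow_sub ha, Real.rpow_one]; ring
    have hstep3 : h₂ t ^ (1 - α) ≤ (y / 2) ^ (1 - α) :=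
      Real.rpow_le_rpow_of_nonpos hy2 hay (by linarith)
    calc 2 * h₂ t / (h₁ t ^ 2 + h₂ t ^ 2) ^ (α / 2)
        ≤ 2 * h₂ t / h₂ t ^ α := hstep1
      _ = 2 * h₂ t ^ (1 - α) := hstep2
      _ ≤ C := by rw [hCdef]; linarith
  -- mean value inequality on [0, t₀]
  have hMVT := (convex_Icc (0 : ℝ) t₀).norm_image_sub_le_of_norm_hasDerivWithin_le
    (f := h₂) (f' := fun t => -2 * h₂ t / (h₁ t ^ 2 + h₂ t ^ 2) ^ (α / 2))
    (fun t ht => (hderiv t (hsub ht)).mono hsub) hbound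
    (left_mem_Icc.2 ht₀0) (right_mem_Icc.2 ht₀0)
  rw [h20, Real.norm_eq_abs, Real.norm_eq_abs, sub_zero, abs_of_nonneg ht₀0] at hMVT
  have h1 : y - h₂ t₀ ≤ C * t₀ := (le_abs_self _).trans (by rwa [abs_sub_comm] at hMVT)
  -- numeric bound : C * t₀ < y / 4
  have h2B : (0 : ℝ) < 2 ^ (2 + α) := Real.rpow_pos_of_pos two_pos _
  have hkey : C * (y ^ α / 2 ^ (2 + α)) = y / 4 := by
    have e1 : (y / 2) ^ (1 - α) = y ^ (1 - α) / 2 ^ (1 - α) :=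
      Real.div_rpow hy.le (by norm_num : (0:ℝ) ≤ 2) (1 - α)
    have e2 : y ^ (1 - α) * y ^ α = y := by
      rw [← Real.rpow_add hy]; norm_num
    have e3 : (2 : ℝ) ^ (1 - α) * 2 ^ (2 + α) = 8 := by
      rw [← Real.rpow_add two_pos]
      norm_num
    have h2p : (0 : ℝ) < 2 ^ (1 - α) := Real.rpow_pos_of_pos two_pos _
    rw [hCdef, e1]
    field_simp
    nlinarith [e2, e3, Real.rpow_pos_of_pos hy α, h2p, h2B]
  have h2 : C * t₀ < y / 4 := by
    calc C * t₀ ≤ C * u := by gcongr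
      _ < C * (y ^ α / 2 ^ (2 + α)) := by gcongr
      _ = y / 4 := hkey
  linarith
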